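/- Let Q: ℝ^d → ℝ^d satisfy ‖Q(w) - w‖² ≤ γ‖w‖² for all w with 0 ≤ γ < 1. Consider the error-feedback recursion ε_{t+1}^i = (αG̃(v_t^i) + ε_t^i) - Q(αG̃(v_t^i) + ε_t^i) over p nodes, starting from ε_0^i = 0, with E[‖G̃(v)‖²] ≤ M². Then for all t, Σ_{i=1}^p E[‖ε_t^i‖²] ≤ (2-γ)γM²α²p/(1-γ)³. -/
import Mathlib


open MeasureTheory

lemma young_ineq {E : Type*} [NormedAddCommGroup E] (a b : E) (c : ℝ) (hc : 0 < c) :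
    ‖a + b‖ ^ 2 ≤ (1 + c) * ‖a‖ ^ 2 + (1 + 1 / c) * ‖b‖ ^ 2 := by
  have h := norm_add_le a b
  have h2 : ‖a + b‖ ^ 2 ≤ (‖a‖ + ‖b‖) ^ 2 := by
    have := norm_nonneg (a + b)
    nlinarith
  have hi : c * (1 / c) = 1 := by field_simp
  nlinarith [sq_nonneg (c * ‖a‖ - ‖b‖), norm_nonneg a, norm_nonneg b]

/-- error-feedback accumulation bound for a `γ`-compressor `Q`
(`‖Q w - w‖² ≤ γ‖w‖²`, `0 ≤ γ < 1`).  With `ε_{t+1}^i = (αG_t^i + ε_t^i) - Q(αG_t^i + ε_t^i)`,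
`ε_0^i = 0`, and `E‖G_t^i‖² ≤ M²`, one has
`Σ_i E‖ε_t^i‖² ≤ (2-γ)γM²α²p/(1-γ)³` for all `t`. -/
theorem stmt16 {d p : ℕ} (hp : 0 < p) {Ω : Type*} [MeasurableSpace Ω]
    (μ : Measure Ω) [IsProbabilityMeasure μ]
    (γ α M : ℝ) (hγ0 : 0 ≤ γ) (hγ1 : γ < 1) (hM : 0 ≤ M)
    (Q : EuclideanSpace ℝ (Fin d) → EuclideanSpace ℝ (Fin d))
    (hQ : ∀ w, ‖Q w - w‖ ^ 2 ≤ γ * ‖w‖ ^ 2)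
    (G : ℕ → Fin p → Ω → EuclideanSpace ℝ (Fin d))
    (hG : ∀ t i, ∫ ω, ‖G t i ω‖ ^ 2 ∂μ ≤ M ^ 2)
    (hGint : ∀ t i, Integrable (fun ω => ‖G t i ω‖ ^ 2) μ)
    (ε : ℕ → Fin p → Ω → EuclideanSpace ℝ (Fin d))
    (hεint : ∀ t i, Integrable (fun ω => ‖ε t i ω‖ ^ 2) μ)
    (hε0 : ∀ i ω, ε 0 i ω = 0)
    (hεrec : ∀ t i ω,
      ε (t + 1) i ω = (α • G t i ω + ε t i ω) - Q (α • G t i ω + ε t i ω)) :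
    ∀ t, ∑ i : Fin p, ∫ ω, ‖ε t i ω‖ ^ 2 ∂μ
      ≤ (2 - γ) * γ * M ^ 2 * α ^ 2 * p / (1 - γ) ^ 3 := by
  have h1γ : (0:ℝ) < 1 - γ := by linarith
  set K : ℝ := (2 - γ) * γ * M ^ 2 * α ^ 2 * p / (1 - γ) ^ 3 with hK
  set A : ℝ := γ * (2 - γ) with hA
  set B : ℝ := γ * (2 - γ) / (1 - γ) * α ^ 2 with hB
  have hA0 : 0 ≤ A := by
    apply mul_nonneg hγ0; linarith
  have hB0 : 0 ≤ B := by
    apply mul_nonneg (div_nonneg hA0 h1γ.le) (sq_nonneg α)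
  have hK0 : 0 ≤ K := by
    apply div_nonneg _ (by positivity)
    exact mul_nonneg (mul_nonneg (mul_nonneg (mul_nonneg (by linarith : (0:ℝ) ≤ 2 - γ) hγ0)
      (sq_nonneg M)) (sq_nonneg α)) (Nat.cast_nonneg p)
  -- pointwise bound
  have hpt : ∀ t i ω, ‖ε (t + 1) i ω‖ ^ 2 ≤ A * ‖ε t i ω‖ ^ 2 + B * ‖G t i ω‖ ^ 2 := by
    intro t i ω
    set w := α • G t i ω + ε t i ω with hw
    have h1 : ‖ε (t + 1) i ω‖ ^ 2 ≤ γ * ‖w‖ ^ 2 := by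
      rw [hεrec t i ω, ← hw, show w - Q w = -(Q w - w) from (neg_sub (Q w) w).symm, norm_neg]
      exact hQ w
    have h2 : ‖w‖ ^ 2 ≤ (2 - γ) * ‖ε t i ω‖ ^ 2 + (1 + 1 / (1 - γ)) * (α ^ 2 * ‖G t i ω‖ ^ 2) := by
      have hy := young_ineq (ε t i ω) (α • G t i ω) (1 - γ) h1γ
      rw [add_comm (ε t i ω)] at hy
      have hn : ‖α • G t i ω‖ ^ 2 = α ^ 2 * ‖G t i ω‖ ^ 2 := by
        rw [norm_smul, mul_pow, Real.norm_eq_abs, sq_abs]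
      rw [hn] at hy
      calc ‖w‖ ^ 2 ≤ (1 + (1 - γ)) * ‖ε t i ω‖ ^ 2 + (1 + 1 / (1 - γ)) * (α ^ 2 * ‖G t i ω‖ ^ 2) := hy
        _ = (2 - γ) * ‖ε t i ω‖ ^ 2 + (1 + 1 / (1 - γ)) * (α ^ 2 * ‖G t i ω‖ ^ 2) := by ring
    have hcoef : γ * (1 + 1 / (1 - γ)) * α ^ 2 = B := by
      have h : (1:ℝ) + 1 / (1 - γ) = (2 - γ) / (1 - γ) := by
        rw [eq_div_iff h1γ.ne']; field_simp; ring
      rw [hB, h]; ring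
    calc ‖ε (t + 1) i ω‖ ^ 2 ≤ γ * ‖w‖ ^ 2 := h1
      _ ≤ γ * ((2 - γ) * ‖ε t i ω‖ ^ 2 + (1 + 1 / (1 - γ)) * (α ^ 2 * ‖G t i ω‖ ^ 2)) :=
          mul_le_mul_of_nonneg_left h2 hγ0
      _ = A * ‖ε t i ω‖ ^ 2 + γ * (1 + 1 / (1 - γ)) * α ^ 2 * ‖G t i ω‖ ^ 2 := by rw [hA]; ring
      _ = A * ‖ε t i ω‖ ^ 2 + B * ‖G t i ω‖ ^ 2 := by rw [hcoef]
  -- integral bound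
  have hint : ∀ t i, ∫ ω, ‖ε (t + 1) i ω‖ ^ 2 ∂μ
      ≤ A * (∫ ω, ‖ε t i ω‖ ^ 2 ∂μ) + B * M ^ 2 := by
    intro t i
    have hIrhs : Integrable (fun ω => A * ‖ε t i ω‖ ^ 2 + B * ‖G t i ω‖ ^ 2) μ :=
      ((hεint t i).const_mul A).add ((hGint t i).const_mul B)
    have h1 : ∫ ω, ‖ε (t + 1) i ω‖ ^ 2 ∂μ
        ≤ ∫ ω, (A * ‖ε t i ω‖ ^ 2 + B * ‖G t i ω‖ ^ 2) ∂μ :=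
      integral_mono (hεint (t + 1) i) hIrhs (fun ω => hpt t i ω)
    have h2 : ∫ ω, (A * ‖ε t i ω‖ ^ 2 + B * ‖G t i ω‖ ^ 2) ∂μ
        = A * (∫ ω, ‖ε t i ω‖ ^ 2 ∂μ) + B * (∫ ω, ‖G t i ω‖ ^ 2 ∂μ) := by
      rw [integral_add ((hεint t i).const_mul A) ((hGint t i).const_mul B),
        integral_const_mul, integral_const_mul]
    have h3 : B * (∫ ω, ‖G t i ω‖ ^ 2 ∂μ) ≤ B * M ^ 2 :=
      mul_le_mul_of_nonneg_left (hG t i) hB0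
    linarith [h1, h2 ▸ h1]
  -- fixed point identity
  have hfix : A * K + B * M ^ 2 * p = K := by
    rw [hA, hB, hK]
    field_simp
    ring
  intro t
  induction t with
  | zero =>
      have : ∀ i : Fin p, ∫ ω, ‖ε 0 i ω‖ ^ 2 ∂μ = 0 := by
        intro i
        simp [hε0 i]
      rw [Finset.sum_congr rfl (fun i _ => this i)]
      simpa using hK0
  | succ t ih =>
      calc ∑ i : Fin p, ∫ ω, ‖ε (t + 1) i ω‖ ^ 2 ∂μ
          ≤ ∑ i : Fin p, (A * (∫ ω, ‖ε t i ω‖ ^ 2 ∂μ) + B * M ^ 2) :=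
            Finset.sum_le_sum fun i _ => hint t i
        _ = A * (∑ i : Fin p, ∫ ω, ‖ε t i ω‖ ^ 2 ∂μ) + B * M ^ 2 * p := by
            rw [Finset.sum_add_distrib, ← Finset.mul_sum]
            simp [mul_comm]
        _ ≤ A * K + B * M ^ 2 * p := by
            have := mul_le_mul_of_nonneg_left ih hA0
            linarith
        _ = K := hfix
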